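/- Let X be a locally compact topological space, Y a Hausdorff uniform space, and equip C(X,Y) with the topology of uniform convergence τ_uc. If a subfamily F ⊆ C(X,Y) is pointwise relatively compact, equicontinuous, and satisfies the extension property, then F is relatively τ_uc-compact. -/

import Mathlib

open Set Filter Topology
open scoped UniformConvergence

/-- If a family `F` of continuous maps from a locally compact space `X` to a Hausdorff
uniform space `Y` is pointwise relatively compact, equicontinuous, and satisfies the
extension property, then `F` is relatively compact for the topology of uniform
convergence. -/
theorem relativelyCompact_uniformConvergence_of_extensionProperty
    {X Y : Type*} [TopologicalSpace X] [WeaklyLocallyCompactSpace X]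
    [UniformSpace Y] [T2Space Y]
    (F : Set (X →ᵤ Y)) (hF : ∀ f ∈ F, Continuous (UniformFun.toFun f))
    (hpt : ∀ x : X,
      IsCompact (closure ((fun f : X →ᵤ Y => UniformFun.toFun f x) '' F)))
    (heq : ∀ x : X, ∀ V ∈ uniformity Y, ∃ U ∈ nhds x, ∀ f ∈ F, ∀ x' ∈ U,
      (UniformFun.toFun f x, UniformFun.toFun f x') ∈ V)
    (hext : ∀ V ∈ uniformity Y, ∃ D : Set X, IsCompact D ∧ ∃ U ∈ uniformity Y,
      ∀ f ∈ F, ∀ g ∈ F,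
        (∀ x ∈ D, (UniformFun.toFun f x, UniformFun.toFun g x) ∈ U) →
        ∀ x : X, (UniformFun.toFun f x, UniformFun.toFun g x) ∈ V) :
    IsCompact (closure F) := by
  classical
  set 𝔖 : Set (Set X) := {K : Set X | IsCompact K} with h𝔖
  have h𝔖ne : 𝔖.Nonempty := ⟨∅, isCompact_empty⟩
  have h𝔖dir : DirectedOn (· ⊆ ·) 𝔖 := fun s hs t ht =>
    ⟨s ∪ t, hs.union ht, subset_union_left, subset_union_right⟩
  -- the image of `F` in the space of `𝔖`-convergence
  set F₂ : Set (X →ᵤ[𝔖] Y) :=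
    (fun f : X →ᵤ Y => UniformOnFun.ofFun 𝔖 (UniformFun.toFun f)) '' F with hF₂
  -- Step 1: the closure of `F₂` in `X →ᵤ[𝔖] Y` is compact, by Arzela-Ascoli.
  have hG : IsCompact (closure F₂) := by
    apply ArzelaAscoli.isCompact_closure_of_isClosedEmbedding
      (F := UniformOnFun.toFun 𝔖) (𝔖 := 𝔖) (fun K hK => hK)
    · exact IsClosedEmbedding.id
    · intro K hK
      have : Equicontinuous ((UniformOnFun.toFun 𝔖) ∘ ((↑) : F₂ → (X →ᵤ[𝔖] Y))) := by
        intro x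
        intro V hV
        obtain ⟨U, hU, hU'⟩ := heq x V hV
        filter_upwards [hU] with x' hx'
        rintro ⟨f, hf⟩
        obtain ⟨f₀, hf₀, rfl⟩ := hf
        exact hU' f₀ hf₀ x' hx'
      exact this.equicontinuousOn K
    · intro K _ x _
      refine ⟨closure ((fun f : X →ᵤ Y => UniformFun.toFun f x) '' F), hpt x, ?_⟩
      rintro i ⟨f₀, hf₀, rfl⟩
      exact subset_closure ⟨f₀, hf₀, rfl⟩
  -- approximation on compact sets by elements of `F`
  have happrox : ∀ g ∈ closure F₂, ∀ C : Set X, IsCompact C → ∀ W ∈ uniformity Y,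
      ∃ f ∈ F, ∀ z ∈ C, (UniformFun.toFun f z, UniformOnFun.toFun 𝔖 g z) ∈ W := by
    intro g hg C hC W hW
    have hN : {h : X →ᵤ[𝔖] Y |
        ∀ z ∈ C, (UniformOnFun.toFun 𝔖 h z, UniformOnFun.toFun 𝔖 g z) ∈ W} ∈ nhds g := by
      exact (UniformOnFun.hasBasis_nhds X Y 𝔖 g h𝔖ne h𝔖dir).mem_of_mem
        (i := (C, W)) ⟨hC, hW⟩
    obtain ⟨h, hh, f₀, hf₀, rfl⟩ := mem_closure_iff_nhds.mp hg _ hN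
    exact ⟨f₀, hf₀, hh⟩
  -- Step 2: extension property for the closure
  have key : ∀ V ∈ uniformity Y, ∃ D : Set X, IsCompact D ∧ ∃ U ∈ uniformity Y,
      SetRel.IsSymm U ∧ ∀ g ∈ closure F₂, ∀ h ∈ closure F₂,
        (∀ x ∈ D, (UniformOnFun.toFun 𝔖 g x, UniformOnFun.toFun 𝔖 h x) ∈ U) →
        ∀ x : X, (UniformOnFun.toFun 𝔖 g x, UniformOnFun.toFun 𝔖 h x) ∈ V := by
    intro V hV
    obtain ⟨V₁, hV₁, hV₁symm, hV₁V⟩ := comp_comp_symm_mem_uniformity_sets hV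
    obtain ⟨D, hD, U, hU, hprop⟩ := hext V₁ hV₁
    obtain ⟨U₁, hU₁, hU₁symm, hU₁U⟩ := comp_comp_symm_mem_uniformity_sets hU
    obtain ⟨W, hW, hWsymm, hWsub⟩ : ∃ W ∈ uniformity Y, SetRel.IsSymm W ∧ W ⊆ U₁ ∩ V₁ := by
      refine ⟨SetRel.symmetrize (U₁ ∩ V₁), symmetrize_mem_uniformity (inter_mem hU₁ hV₁),
        SetRel.isSymm_symmetrize, Set.inter_subset_left⟩
    refine ⟨D, hD, U₁, hU₁, hU₁symm, ?_⟩
    intro g hg h hh hgh x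
    obtain ⟨f, hf, hfg⟩ := happrox g hg (insert x D) (hD.insert x) W hW
    obtain ⟨f', hf', hf'h⟩ := happrox h hh (insert x D) (hD.insert x) W hW
    have hff' : ∀ z ∈ D, (UniformFun.toFun f z, UniformFun.toFun f' z) ∈ U := by
      intro z hz
      apply hU₁U
      refine ⟨UniformOnFun.toFun 𝔖 h z, ⟨UniformOnFun.toFun 𝔖 g z, ?_, hgh z hz⟩, ?_⟩
      · exact (hWsub (hfg z (mem_insert_of_mem x hz))).1
      · exact (hWsub (hWsymm.symm _ _ (hf'h z (mem_insert_of_mem x hz)))).1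
    have hx : (UniformFun.toFun f x, UniformFun.toFun f' x) ∈ V₁ :=
      hprop f hf f' hf' hff' x
    apply hV₁V
    refine ⟨UniformFun.toFun f' x, ⟨UniformFun.toFun f x, ?_, hx⟩, ?_⟩
    · exact hV₁symm.symm _ _ (hWsub (hfg x (mem_insert x D))).2
    · exact (hWsub (hf'h x (mem_insert x D))).2
  -- Step 3: the natural map to `X →ᵤ Y` is continuous on the closure
  set φ : (X →ᵤ[𝔖] Y) → (X →ᵤ Y) :=
    fun g => UniformFun.ofFun (UniformOnFun.toFun 𝔖 g) with hφdef
  have hφ : ContinuousOn φ (closure F₂) := by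
    intro g hg
    rw [ContinuousWithinAt, (UniformFun.hasBasis_nhds X Y (φ g)).tendsto_right_iff]
    intro V hV
    obtain ⟨D, hD, U, hU, hUsymm, hkey⟩ := key V hV
    have hN : {h : X →ᵤ[𝔖] Y |
        ∀ z ∈ D, (UniformOnFun.toFun 𝔖 h z, UniformOnFun.toFun 𝔖 g z) ∈ U} ∈ nhds g :=
      (UniformOnFun.hasBasis_nhds X Y 𝔖 g h𝔖ne h𝔖dir).mem_of_mem (i := (D, U)) ⟨hD, hU⟩
    filter_upwards [nhdsWithin_le_nhds hN, self_mem_nhdsWithin] with h hh hhcl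
    exact hkey g hg h hhcl (fun z hz => hUsymm.symm _ _ (hh z hz))
  have hK : IsCompact (φ '' closure F₂) := hG.image_of_continuousOn hφ
  have hsub : F ⊆ φ '' closure F₂ := by
    intro f hf
    exact ⟨UniformOnFun.ofFun 𝔖 (UniformFun.toFun f), subset_closure ⟨f, hf, rfl⟩, rfl⟩
  exact hK.of_isClosed_subset isClosed_closure
    (closure_minimal hsub hK.isClosed)
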